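/- arXiv:1908.04432 — 2 statements merged into one kernel-verified Lean document; each statement's English description precedes it below -/
import Mathlib

section
/- Two density matrices σ1 and σ2 on ℂ^n (n ≥ 1) are subjectively compatible if and only if the ranges of σ1 and σ2, viewed as linear endomorphisms of ℂ^n, have nontrivial intersection: range(σ1) ⊓ range(σ2) ≠ ⊥. -/
open scoped ComplexOrder

/-- A density matrix on `ℂ^n`: a positive semidefinite matrix of trace `1`. -/
def IsDensityMatrix {n : ℕ} (σ : Matrix (Fin n) (Fin n) ℂ) : Prop :=
  σ.PosSemidef ∧ σ.trace = 1

/-- The positive semidefinite square root of a positive semidefinite matrix (Mathlib's former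
`Matrix.PosSemidef.sqrt`, removed upstream; restated with its old definition). -/
noncomputable def Matrix.PosSemidef.sqrt {n : Type*} [Fintype n] [DecidableEq n] {𝕜 : Type*}
    [RCLike 𝕜] {A : Matrix n n 𝕜} (hA : A.PosSemidef) : Matrix n n 𝕜 :=
  (hA.1.eigenvectorUnitary : Matrix n n 𝕜) *
    Matrix.diagonal ((↑) ∘ (√·) ∘ hA.1.eigenvalues) *
    (star hA.1.eigenvectorUnitary : Matrix n n 𝕜)

/-- Subjective compatibility of two positive semidefinite state assignments
`σ1`, `σ2` on `ℂ^n`: there exist a finite nonempty type `X` and a POVM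
`E : X → Matrix (Fin n) (Fin n) ℂ` such that every outcome has positive
probability under both states, and for some outcome `xt` the quantum Bayesian
updates `(tr (E xt * σᵢ))⁻¹ • (√σᵢ * E xt * √σᵢ)` of the two states agree. -/
def QSubjCompatible {n : ℕ} {σ1 σ2 : Matrix (Fin n) (Fin n) ℂ}
    (h1 : σ1.PosSemidef) (h2 : σ2.PosSemidef) : Prop :=
  ∃ (X : Type) (_ : Fintype X),
    Nonempty X ∧
    ∃ E : X → Matrix (Fin n) (Fin n) ℂ,
      (∀ x, (E x).PosSemidef) ∧
      (∑ x, E x = 1) ∧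
      (∀ x, 0 < ((E x * σ1).trace).re ∧ 0 < ((E x * σ2).trace).re) ∧
      ∃ xt : X,
        ((E xt * σ1).trace)⁻¹ • (h1.sqrt * E xt * h1.sqrt) =
        ((E xt * σ2).trace)⁻¹ • (h2.sqrt * E xt * h2.sqrt)

section Auxiliary

open Matrix

variable {n : ℕ} {C : Matrix (Fin n) (Fin n) ℂ}

/-- Matrix function via the spectral decomposition of a Hermitian matrix. -/
noncomputable def mfun (hC : C.IsHermitian) (g : ℝ → ℝ) : Matrix (Fin n) (Fin n) ℂ :=
  (hC.eigenvectorUnitary : Matrix (Fin n) (Fin n) ℂ) *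
    Matrix.diagonal (fun i => (g (hC.eigenvalues i) : ℂ)) *
    (star hC.eigenvectorUnitary : Matrix (Fin n) (Fin n) ℂ)

lemma mfun_mul (hC : C.IsHermitian) (g h : ℝ → ℝ) :
    mfun hC g * mfun hC h = mfun hC (fun x => g x * h x) := by
  have h1 : (star hC.eigenvectorUnitary : Matrix (Fin n) (Fin n) ℂ) *
      (hC.eigenvectorUnitary : Matrix (Fin n) (Fin n) ℂ) = 1 := by
    exact_mod_cast Unitary.coe_star_mul_self hC.eigenvectorUnitary
  unfold mfun
  simp only [Matrix.mul_assoc]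
  rw [← Matrix.mul_assoc (star hC.eigenvectorUnitary : Matrix (Fin n) (Fin n) ℂ)
      (hC.eigenvectorUnitary : Matrix (Fin n) (Fin n) ℂ), h1, Matrix.one_mul,
    ← Matrix.mul_assoc (Matrix.diagonal _), Matrix.diagonal_mul_diagonal]
  push_cast
  rfl

lemma mfun_id (hC : C.IsHermitian) : mfun hC id = C := by
  conv_rhs => rw [hC.spectral_theorem]
  rfl

lemma mfun_herm (hC : C.IsHermitian) (g : ℝ → ℝ) : (mfun hC g).IsHermitian := by
  unfold mfun Matrix.IsHermitian
  simp only [star_eq_conjTranspose, conjTranspose_mul, conjTranspose_conjTranspose,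
    diagonal_conjTranspose, Matrix.mul_assoc]
  congr 1
  ext i
  simp [Complex.conj_ofReal]

lemma mfun_congr (hC : C.IsHermitian) (g h : ℝ → ℝ) (hev : ∀ i, 0 ≤ hC.eigenvalues i)
    (hgh : ∀ x, 0 ≤ x → g x = h x) : mfun hC g = mfun hC h := by
  have hfn : (fun i => (g (hC.eigenvalues i) : ℂ)) = (fun i => (h (hC.eigenvalues i) : ℂ)) :=
    funext fun i => by rw [hgh _ (hev i)]
  rw [mfun, mfun, hfn]

lemma mfun_psd (hC : C.IsHermitian) (g : ℝ → ℝ) (hev : ∀ i, 0 ≤ hC.eigenvalues i)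
    (hg : ∀ x, 0 ≤ x → 0 ≤ g x) : (mfun hC g).PosSemidef := by
  have : (Matrix.diagonal (fun i => (g (hC.eigenvalues i) : ℂ))).PosSemidef := by
    refine Matrix.posSemidef_diagonal_iff.mpr fun i => ?_
    rw [RCLike.nonneg_iff]
    constructor
    · simpa using hg _ (hev i)
    · simp
  simpa [mfun, Matrix.star_eq_conjTranspose] using
    this.mul_mul_conjTranspose_same (hC.eigenvectorUnitary : Matrix (Fin n) (Fin n) ℂ)

lemma Matrix.PosSemidef.posSemidef_sqrt (hC : C.PosSemidef) : hC.sqrt.PosSemidef :=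
  mfun_psd hC.1 Real.sqrt hC.eigenvalues_nonneg fun x _ => Real.sqrt_nonneg x

lemma Matrix.PosSemidef.sqrt_mul_self (hC : C.PosSemidef) : hC.sqrt * hC.sqrt = C := by
  change mfun hC.1 Real.sqrt * mfun hC.1 Real.sqrt = C
  rw [mfun_mul]
  refine (mfun_congr hC.1 _ _ hC.eigenvalues_nonneg fun x hx => ?_).trans (mfun_id hC.1)
  exact Real.mul_self_sqrt hx

lemma matrix_eq_of_mulVec {M N : Matrix (Fin n) (Fin n) ℂ}
    (h : ∀ y, M *ᵥ y = N *ᵥ y) : M = N := by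
  apply Matrix.toLin'.injective
  apply LinearMap.ext fun y => ?_
  simpa only [Matrix.toLin'_apply] using h y

lemma herm_dot {A : Matrix (Fin n) (Fin n) ℂ} (hA : A.IsHermitian) (x y : Fin n → ℂ) :
    star x ⬝ᵥ A *ᵥ y = star (A *ᵥ x) ⬝ᵥ y := by
  rw [star_mulVec, hA, Matrix.dotProduct_mulVec]

lemma mulVec_self_dot {A : Matrix (Fin n) (Fin n) ℂ} (hA : A.IsHermitian) (x : Fin n → ℂ) :
    star x ⬝ᵥ (A * A) *ᵥ x = star (A *ᵥ x) ⬝ᵥ (A *ᵥ x) := by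
  rw [← Matrix.mulVec_mulVec, herm_dot hA]

lemma ker_toLin'_mul_self {A : Matrix (Fin n) (Fin n) ℂ} (hA : A.IsHermitian) :
    LinearMap.ker (Matrix.toLin' (A * A)) = LinearMap.ker (Matrix.toLin' A) := by
  ext x
  simp only [LinearMap.mem_ker, Matrix.toLin'_apply]
  constructor
  · intro h
    have h0 : star (A *ᵥ x) ⬝ᵥ (A *ᵥ x) = 0 := by
      rw [← mulVec_self_dot hA, h, dotProduct_zero]
    exact dotProduct_star_self_eq_zero.mp h0
  · intro h
    rw [← Matrix.mulVec_mulVec, h, Matrix.mulVec_zero]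

lemma range_toLin'_mul_self {A : Matrix (Fin n) (Fin n) ℂ} (hA : A.IsHermitian) :
    LinearMap.range (Matrix.toLin' (A * A)) = LinearMap.range (Matrix.toLin' A) := by
  have hle : LinearMap.range (Matrix.toLin' (A * A)) ≤ LinearMap.range (Matrix.toLin' A) := by
    rw [Matrix.toLin'_mul]
    exact LinearMap.range_comp_le_range _ _
  refine Submodule.eq_of_le_of_finrank_le hle ?_
  have e1 := LinearMap.finrank_range_add_finrank_ker (Matrix.toLin' (A * A))
  have e2 := LinearMap.finrank_range_add_finrank_ker (Matrix.toLin' A)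
  rw [ker_toLin'_mul_self hA] at e1
  omega

lemma mul_vecMulVec {A : Matrix (Fin n) (Fin n) ℂ} (u v : Fin n → ℂ) :
    A * Matrix.vecMulVec u v = Matrix.vecMulVec (A *ᵥ u) v := by
  ext i j
  simp [Matrix.mul_apply, Matrix.vecMulVec_apply, Matrix.mulVec, dotProduct,
    Finset.sum_mul, mul_assoc]

lemma vecMulVec_mul {A : Matrix (Fin n) (Fin n) ℂ} (u v : Fin n → ℂ) :
    Matrix.vecMulVec u v * A = Matrix.vecMulVec u (v ᵥ* A) := by
  ext i j
  simp [Matrix.mul_apply, Matrix.vecMulVec_apply, Matrix.vecMul, dotProduct,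
    Finset.mul_sum, mul_assoc]

lemma star_vecMul_herm {A : Matrix (Fin n) (Fin n) ℂ} (hA : A.IsHermitian) (u : Fin n → ℂ) :
    star u ᵥ* A = star (A *ᵥ u) := by
  rw [star_mulVec, hA]

lemma trace_vecMulVec_mul (u : Fin n → ℂ) (σ : Matrix (Fin n) (Fin n) ℂ) :
    (Matrix.vecMulVec u (star u) * σ).trace = star u ⬝ᵥ (σ *ᵥ u) := by
  simp only [Matrix.trace, Matrix.diag, Matrix.mul_apply, Matrix.vecMulVec_apply,
    dotProduct, Matrix.mulVec, Pi.star_apply]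
  rw [Finset.sum_comm]
  congr 1; funext j
  rw [Finset.mul_sum]
  congr 1; funext i
  ring

lemma dot_cs (u x : Fin n → ℂ) :
    Complex.normSq (star u ⬝ᵥ x) ≤ (star u ⬝ᵥ u).re * (star x ⬝ᵥ x).re := by
  let u' : EuclideanSpace ℂ (Fin n) := (WithLp.equiv 2 (Fin n → ℂ)).symm u
  let x' : EuclideanSpace ℂ (Fin n) := (WithLp.equiv 2 (Fin n → ℂ)).symm x
  have h1 : star u ⬝ᵥ x = (inner ℂ u' x' : ℂ) := by
    rw [dotProduct_comm]; exact (EuclideanSpace.inner_eq_star_dotProduct u' x').symm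
  have h2 : star u ⬝ᵥ u = (inner ℂ u' u' : ℂ) := by
    rw [dotProduct_comm]; exact (EuclideanSpace.inner_eq_star_dotProduct u' u').symm
  have h3 : star x ⬝ᵥ x = (inner ℂ x' x' : ℂ) := by
    rw [dotProduct_comm]; exact (EuclideanSpace.inner_eq_star_dotProduct x' x').symm
  have hcs := norm_inner_le_norm (𝕜 := ℂ) u' x'
  have hu : (star u ⬝ᵥ u).re = ‖u'‖ ^ 2 := by
    rw [h2]; exact_mod_cast inner_self_eq_norm_sq (𝕜 := ℂ) u'
  have hx : (star x ⬝ᵥ x).re = ‖x'‖ ^ 2 := by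
    rw [h3]; exact_mod_cast inner_self_eq_norm_sq (𝕜 := ℂ) x'
  have hn : Complex.normSq (star u ⬝ᵥ x) = ‖(inner ℂ u' x' : ℂ)‖ ^ 2 := by
    rw [h1, Complex.normSq_eq_norm_sq]
  rw [hn, hu, hx]
  calc ‖(inner ℂ u' x' : ℂ)‖ ^ 2 ≤ (‖u'‖ * ‖x'‖) ^ 2 := by
        apply pow_le_pow_left₀ (norm_nonneg _) hcs
    _ = ‖u'‖ ^ 2 * ‖x'‖ ^ 2 := by ring

lemma dot_self_coe (w : Fin n → ℂ) :
    star w ⬝ᵥ w = ((∑ j, Complex.normSq (w j) : ℝ) : ℂ) := by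
  push_cast
  simp only [dotProduct, Pi.star_apply]
  congr 1; funext j
  rw [Complex.normSq_eq_norm_sq]
  exact_mod_cast Complex.conj_mul' (w j)

lemma sum_normSq_nonneg (w : Fin n → ℂ) : 0 ≤ ∑ j, Complex.normSq (w j) :=
  Finset.sum_nonneg fun j _ => Complex.normSq_nonneg _

lemma sum_normSq_pos {w : Fin n → ℂ} (hw : w ≠ 0) : 0 < ∑ j, Complex.normSq (w j) := by
  rcases Function.ne_iff.mp hw with ⟨j, hj⟩
  exact Finset.sum_pos' (fun i _ => Complex.normSq_nonneg _)
    ⟨j, Finset.mem_univ j, Complex.normSq_pos.mpr hj⟩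

set_option maxHeartbeats 1000000

noncomputable def ff : ℝ → ℝ := fun x => (Real.sqrt x)⁻¹
noncomputable def pp : ℝ → ℝ := fun x => x * (ff x * ff x)

lemma pp_eq {x : ℝ} (hx : 0 ≤ x) : pp x = if x = 0 then 0 else 1 := by
  rcases eq_or_lt_of_le hx with h | h
  · simp [← h, pp, ff]
  · rw [if_neg (ne_of_gt h), pp, ff, ← mul_inv, Real.mul_self_sqrt hx,
      mul_inv_cancel₀ (ne_of_gt h)]

lemma ff_zero : ff 0 = 0 := by simp [ff]

section main
variable {A B : Matrix (Fin n) (Fin n) ℂ}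
  (hA : A.PosSemidef) (hB : B.PosSemidef) (hCdef : C = A + B) (hCH : C.IsHermitian)

include hA hB hCdef in
lemma kerCA : ∀ z, C *ᵥ z = 0 → A *ᵥ z = 0 := by
  intro z hz
  have h0 : star z ⬝ᵥ A *ᵥ z + star z ⬝ᵥ B *ᵥ z = 0 := by
    rw [← dotProduct_add, ← Matrix.add_mulVec, ← hCdef, hz, dotProduct_zero]
  have hA0 : star z ⬝ᵥ A *ᵥ z = 0 := ((add_eq_zero_iff_of_nonneg (hA.dotProduct_mulVec_nonneg z) (hB.dotProduct_mulVec_nonneg z)).mp h0).1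
  exact (hA.dotProduct_mulVec_zero_iff z).mp hA0

include hA hB hCdef in
lemma kerCB : ∀ z, C *ᵥ z = 0 → B *ᵥ z = 0 := by
  intro z hz
  have h0 : star z ⬝ᵥ A *ᵥ z + star z ⬝ᵥ B *ᵥ z = 0 := by
    rw [← dotProduct_add, ← Matrix.add_mulVec, ← hCdef, hz, dotProduct_zero]
  have hB0 : star z ⬝ᵥ B *ᵥ z = 0 := ((add_eq_zero_iff_of_nonneg (hA.dotProduct_mulVec_nonneg z) (hB.dotProduct_mulVec_nonneg z)).mp h0).2
  exact (hB.dotProduct_mulVec_zero_iff z).mp hB0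

-- step 1: from nontrivial intersection, produce u with A *ᵥ u ∥ B *ᵥ u, both nonzero
include hA hB hCdef in
lemma parallel_vec (hev : ∀ i, 0 ≤ hCH.eigenvalues i)
    {v a b : Fin n → ℂ} (hva : A *ᵥ a = v) (hvb : B *ᵥ b = v) (hv0 : v ≠ 0) :
    ∃ (u : Fin n → ℂ) (r : ℝ), r ≠ 0 ∧ A *ᵥ u ≠ 0 ∧ B *ᵥ u = (r : ℂ) • (A *ᵥ u) := by
  set S := mfun hCH ff with hSdef
  set P := mfun hCH pp with hPdef
  have hid : mfun hCH id = C := mfun_id hCH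
  have hSS : S * S = mfun hCH (fun x => ff x * ff x) := mfun_mul hCH ff ff
  have hCSS : C * (S * S) = P := by
    have h := mfun_mul hCH id (fun x => ff x * ff x)
    rw [hid] at h
    rw [hSS, h]
    exact mfun_congr hCH _ _ hev fun x hx => by simp only [id_eq, pp]
  have hSSC : (S * S) * C = P := by
    have h := mfun_mul hCH (fun x => ff x * ff x) id
    rw [hid] at h
    rw [hSS, h]
    exact mfun_congr hCH _ _ hev fun x hx => by simp only [id_eq, pp]; ring
  have hCP : C * P = C := by
    have h := mfun_mul hCH id pp
    rw [hid] at h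
    rw [hPdef, h]
    refine (mfun_congr hCH _ _ hev fun x hx => ?_).trans hid
    simp only [id_eq]
    rw [pp_eq hx]
    rcases eq_or_ne x 0 with h | h <;> simp [h]
  have hSP : S * P = S := by
    have h := mfun_mul hCH ff pp
    rw [hSdef, hPdef, h]
    refine mfun_congr hCH _ _ hev fun x hx => ?_
    rw [pp_eq hx]
    rcases eq_or_ne x 0 with h | h <;> simp [h, ff_zero]
  have hPS : P * S = S := by
    have h := mfun_mul hCH pp ff
    rw [hSdef, hPdef, h]
    refine mfun_congr hCH _ _ hev fun x hx => ?_
    rw [pp_eq hx]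
    rcases eq_or_ne x 0 with h | h <;> simp [h, ff_zero]
  have hSCS : S * C * S = P := by
    have h := mfun_mul hCH ff id
    rw [hid] at h
    have h2 := mfun_mul hCH (fun x => ff x * id x) ff
    rw [hSdef, h, h2, hPdef]
    exact mfun_congr hCH _ _ hev fun x hx => by simp only [id_eq, pp]; ring
  have hCCSS : (C * C) * (S * S) = C := by
    have h := mfun_mul hCH id id
    rw [hid] at h
    have h2 := mfun_mul hCH (fun x => id x * id x) (fun x => ff x * ff x)
    rw [hSS, h, h2]
    refine (mfun_congr hCH _ _ hev fun x hx => ?_).trans hid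
    simp only [id_eq]
    have : x * x * (ff x * ff x) = x * pp x := by simp only [pp]; ring
    rw [this, pp_eq hx]
    rcases eq_or_ne x 0 with h | h <;> simp [h]
  have hPherm : P.IsHermitian := mfun_herm hCH pp
  have hSherm : S.IsHermitian := mfun_herm hCH ff
  have hCPm1 : C * (P - 1) = 0 := by rw [Matrix.mul_sub, Matrix.mul_one, hCP, sub_self]
  have hAP : A * P = A := by
    have h5 : A * (P - 1) = 0 := by
      refine matrix_eq_of_mulVec fun y => ?_
      rw [Matrix.zero_mulVec, ← Matrix.mulVec_mulVec]
      refine kerCA hA hB hCdef _ ?_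
      rw [Matrix.mulVec_mulVec, hCPm1, Matrix.zero_mulVec]
    exact sub_eq_zero.mp (by rwa [Matrix.mul_sub, Matrix.mul_one] at h5)
  have hPA : P * A = A := by
    have := congrArg Matrix.conjTranspose hAP
    rwa [Matrix.conjTranspose_mul, hPherm.eq, hA.1.eq] at this
  have hBP : B * P = B := by
    have h5 : B * (P - 1) = 0 := by
      refine matrix_eq_of_mulVec fun y => ?_
      rw [Matrix.zero_mulVec, ← Matrix.mulVec_mulVec]
      refine kerCB hA hB hCdef _ ?_
      rw [Matrix.mulVec_mulVec, hCPm1, Matrix.zero_mulVec]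
    exact sub_eq_zero.mp (by rwa [Matrix.mul_sub, Matrix.mul_one] at h5)
  have hPB : P * B = B := by
    have := congrArg Matrix.conjTranspose hBP
    rwa [Matrix.conjTranspose_mul, hPherm.eq, hB.1.eq] at this
  -- the compressed operator D
  set D := S * A * S with hDdef
  have hDherm : D.IsHermitian := by
    rw [Matrix.IsHermitian, hDdef, Matrix.conjTranspose_mul, Matrix.conjTranspose_mul,
      hSherm.eq, hA.1.eq, Matrix.mul_assoc]
  by_cases hDD : D * D = D
  · -- degenerate case: contradiction with v ≠ 0
    exfalso
    have hBeq : B = C - A := by rw [hCdef]; exact (add_sub_cancel_left A B).symm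
    have hSBS : S * B * S = P - D := by
      rw [hBeq, Matrix.mul_sub, Matrix.sub_mul, hSCS, hDdef]
    have hDP : D * P = D := by
      rw [hDdef, Matrix.mul_assoc (S * A) S P, hSP]
    have h0 : D * (S * B * S) = 0 := by
      rw [hSBS, Matrix.mul_sub, hDP, hDD, sub_self]
    have hASB : A * (S * S) * B = 0 := by
      calc A * (S * S) * B
          = (P * A) * (S * S) * (B * P) := by rw [hPA, hBP]
        _ = (C * (S * S)) * (A * (S * S) * B) * ((S * S) * C) := by
            rw [hCSS, hSSC]
            simp only [Matrix.mul_assoc]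
        _ = (C * S) * (D * (S * B * S)) * (S * C) := by
            rw [hDdef]
            simp only [Matrix.mul_assoc]
        _ = 0 := by rw [h0, Matrix.mul_zero, Matrix.zero_mul]
    have hSSv : (S * S) *ᵥ v = 0 := by
      have hSSpsd : (S * S).PosSemidef := by
        rw [hSS]
        exact mfun_psd hCH _ hev fun x hx => mul_self_nonneg _
      refine (hSSpsd.dotProduct_mulVec_zero_iff v).mp ?_
      have hd : star a ⬝ᵥ ((A * ((S * S) * B)) *ᵥ b) = star v ⬝ᵥ ((S * S) *ᵥ v) := by
        rw [← Matrix.mulVec_mulVec, herm_dot hA.1, hva, ← Matrix.mulVec_mulVec, hvb]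
      rw [← hd, ← Matrix.mul_assoc, hASB, Matrix.zero_mulVec, dotProduct_zero]
    have hCv : C *ᵥ v = 0 := by
      rw [← hCCSS, ← Matrix.mulVec_mulVec, hSSv, Matrix.mulVec_zero]
    have hAv : A *ᵥ v = 0 := kerCA hA hB hCdef v hCv
    refine hv0 (dotProduct_star_self_eq_zero.mp ?_)
    rw [← hva, ← herm_dot hA.1, hva, hAv, dotProduct_zero]
  · -- main case: eigenvector of D with eigenvalue ∉ {0, 1}
    obtain ⟨i, hi⟩ : ∃ i, hDherm.eigenvalues i ^ 2 ≠ hDherm.eigenvalues i := by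
      by_contra hall
      push_neg at hall
      apply hDD
      set U := (hDherm.eigenvectorUnitary : Matrix (Fin n) (Fin n) ℂ) with hUdef
      set V := (star hDherm.eigenvectorUnitary : Matrix (Fin n) (Fin n) ℂ) with hVdef
      have hVU : V * U = 1 := by
        exact_mod_cast Unitary.coe_star_mul_self hDherm.eigenvectorUnitary
      set d : Matrix (Fin n) (Fin n) ℂ := Matrix.diagonal (RCLike.ofReal ∘ hDherm.eigenvalues) with hddef
      have hdd : d * d = d := by
        rw [hddef, Matrix.diagonal_mul_diagonal]
        refine congrArg Matrix.diagonal (funext fun j => ?_)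
        simp only [Function.comp_apply]
        rw [← RCLike.ofReal_mul, ← pow_two, hall j]
      calc D * D = (U * d * V) * (U * d * V) := by
            have hs : D = U * d * V := hDherm.spectral_theorem
            rw [hs]
        _ = U * d * (V * U) * d * V := by simp only [Matrix.mul_assoc]
        _ = U * (d * d) * V := by rw [hVU, Matrix.mul_one, Matrix.mul_assoc U d d]
        _ = U * d * V := by rw [hdd]
        _ = D := hDherm.spectral_theorem.symm
    set t := hDherm.eigenvalues i with htdef
    have ht0 : t ≠ 0 := fun h => hi (by rw [h]; ring)
    have ht1 : t ≠ 1 := fun h => hi (by rw [h]; ring)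
    set x : Fin n → ℂ := ⇑(hDherm.eigenvectorBasis i) with hxdef
    have hx0 : x ≠ 0 := by
      intro h
      refine hDherm.eigenvectorBasis.orthonormal.ne_zero i ?_
      ext1 j
      exact congrFun h j
    have hDx : D *ᵥ x = (t : ℂ) • x := by
      rw [hxdef, hDherm.mulVec_eigenvectorBasis i]
      funext j
      simp [Complex.real_smul, htdef]
    refine ⟨S *ᵥ x, (1 - t) / t, ?_, ?_, ?_⟩
    · exact div_ne_zero (sub_ne_zero.mpr fun h => ht1 h.symm) ht0
    · -- A *ᵥ (S *ᵥ x) ≠ 0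
      intro h
      have hDx0 : D *ᵥ x = 0 := by
        rw [hDdef, Matrix.mul_assoc, ← Matrix.mulVec_mulVec, ← Matrix.mulVec_mulVec, h,
          Matrix.mulVec_zero]
      rw [hDx] at hDx0
      rcases smul_eq_zero.mp hDx0 with h' | h'
      · exact Complex.ofReal_ne_zero.mpr ht0 h'
      · exact hx0 h'
    · -- B *ᵥ u = r • A *ᵥ u
      have hAu : A *ᵥ (S *ᵥ x) = (t : ℂ) • (C *ᵥ (S *ᵥ x)) := by
        have hid2 : A * S = (C * S) * D := by
          calc A * S = (P * A) * S := by rw [hPA]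
            _ = ((C * (S * S)) * A) * S := by rw [hCSS]
            _ = (C * S) * (S * A * S) := by simp only [Matrix.mul_assoc]
            _ = (C * S) * D := by rw [hDdef]
        calc A *ᵥ (S *ᵥ x) = ((C * S) * D) *ᵥ x := by rw [Matrix.mulVec_mulVec, hid2]
          _ = (C * S) *ᵥ (D *ᵥ x) := (Matrix.mulVec_mulVec x (C * S) D).symm
          _ = (C * S) *ᵥ ((t : ℂ) • x) := by rw [hDx]
          _ = (t : ℂ) • ((C * S) *ᵥ x) := Matrix.mulVec_smul _ _ _
          _ = (t : ℂ) • (C *ᵥ (S *ᵥ x)) := by rw [← Matrix.mulVec_mulVec]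
      have hCu : C *ᵥ (S *ᵥ x) = A *ᵥ (S *ᵥ x) + B *ᵥ (S *ᵥ x) := by
        rw [hCdef, Matrix.add_mulVec]
      rw [hCu, smul_add] at hAu
      have hsolve : (t : ℂ) • (B *ᵥ (S *ᵥ x)) = (1 - (t : ℂ)) • (A *ᵥ (S *ᵥ x)) := by
        have := hAu
        rw [sub_smul, one_smul]
        linear_combination (norm := module) - this
      have htC : (t : ℂ) ≠ 0 := Complex.ofReal_ne_zero.mpr ht0
      have := congrArg (fun y => (t : ℂ)⁻¹ • y) hsolve
      simp only [smul_smul, inv_mul_cancel₀ htC, one_smul] at this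
      rw [this]
      congr 1
      push_cast
      field_simp
end main

lemma star_mul_self_coe (z : ℂ) : star z * z = (Complex.normSq z : ℂ) := by
  rw [Complex.normSq_eq_norm_sq]
  exact_mod_cast Complex.conj_mul' z

lemma build_povm {σ1 σ2 : Matrix (Fin n) (Fin n) ℂ}
    (h1 : σ1.PosSemidef) (h2 : σ2.PosSemidef) (htr1 : σ1.trace = 1) (htr2 : σ2.trace = 1)
    (u : Fin n → ℂ) (r : ℝ) (hr : r ≠ 0)
    (hw1 : h1.sqrt *ᵥ u ≠ 0) (hw2 : h2.sqrt *ᵥ u = (r : ℂ) • (h1.sqrt *ᵥ u)) :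
    QSubjCompatible h1 h2 := by
  set A := h1.sqrt with hAdef
  set B := h2.sqrt with hBdef
  have hAH : A.IsHermitian := h1.posSemidef_sqrt.1
  have hBH : B.IsHermitian := h2.posSemidef_sqrt.1
  set w1 := A *ᵥ u with hw1def
  set w2 := B *ᵥ u with hw2def
  set q1 := ∑ j, Complex.normSq (w1 j) with hq1def
  set q2 := ∑ j, Complex.normSq (w2 j) with hq2def
  set qu := ∑ j, Complex.normSq (u j) with hqudef
  have hq1 : 0 < q1 := sum_normSq_pos hw1
  have hw20 : w2 ≠ 0 := by
    rw [hw2]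
    intro h
    rcases smul_eq_zero.mp h with h' | h'
    · exact Complex.ofReal_ne_zero.mpr hr h'
    · exact hw1 h'
  have hq2 : 0 < q2 := sum_normSq_pos hw20
  have hqu : 0 ≤ qu := sum_normSq_nonneg u
  set den : ℝ := 1 + qu + q1 + q2 with hdendef
  have hden : 0 < den := by rw [hdendef]; linarith
  set ε : ℝ := den⁻¹ with hεdef
  have hε : 0 < ε := inv_pos.mpr hden
  set M0 := Matrix.vecMulVec u (star u) with hM0def
  have hM0v : ∀ y, M0 *ᵥ y = (star u ⬝ᵥ y) • u := by
    intro y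
    funext i
    simp only [hM0def, Matrix.mulVec, Matrix.vecMulVec_apply, dotProduct,
      Pi.smul_apply, Pi.star_apply, smul_eq_mul]
    rw [Finset.sum_mul]
    exact Finset.sum_congr rfl fun j _ => by ring
  have hstar_dot : ∀ y, star y ⬝ᵥ u = star (star u ⬝ᵥ y) := by
    intro y
    simp [dotProduct, mul_comm]
  have hdotM0 : ∀ y, star y ⬝ᵥ (M0 *ᵥ y) = (Complex.normSq (star u ⬝ᵥ y) : ℂ) := by
    intro y
    rw [hM0v y, dotProduct_smul, smul_eq_mul, mul_comm, hstar_dot y,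
      star_mul_self_coe]
  have hM0H : M0.IsHermitian := by
    rw [Matrix.IsHermitian]
    ext i j
    simp only [hM0def, Matrix.conjTranspose_apply, Matrix.vecMulVec_apply, Pi.star_apply,
      star_mul', star_star]
    ring
  set E0 := (ε : ℂ) • M0 with hE0def
  set E1 := (1 : Matrix (Fin n) (Fin n) ℂ) - E0 with hE1def
  have hE0psd : E0.PosSemidef := by
    refine Matrix.PosSemidef.of_dotProduct_mulVec_nonneg ?_ ?_
    · rw [hE0def, Matrix.IsHermitian, Matrix.conjTranspose_smul, hM0H.eq, RCLike.star_def,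
        Complex.conj_ofReal]
    · intro y
      rw [hE0def, Matrix.smul_mulVec, dotProduct_smul, smul_eq_mul, hdotM0 y]
      have h0 : (0:ℂ) ≤ (ε : ℂ) := by exact_mod_cast Complex.zero_le_real.mpr hε.le
      have h1' : (0:ℂ) ≤ (Complex.normSq (star u ⬝ᵥ y) : ℂ) := by
        exact_mod_cast Complex.zero_le_real.mpr (Complex.normSq_nonneg _)
      exact mul_nonneg h0 h1'
  have hεqu : ε * qu ≤ 1 := by
    rw [hεdef, inv_mul_le_iff₀ hden, mul_one, hdendef]
    linarith
  have hE1psd : E1.PosSemidef := by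
    refine Matrix.PosSemidef.of_dotProduct_mulVec_nonneg ?_ ?_
    · rw [hE1def, Matrix.IsHermitian, Matrix.conjTranspose_sub, Matrix.conjTranspose_one,
        hE0psd.1.eq]
    · intro y
      rw [hE1def, Matrix.sub_mulVec, dotProduct_sub, Matrix.one_mulVec,
        hE0def, Matrix.smul_mulVec, dotProduct_smul, smul_eq_mul, hdotM0 y,
        dot_self_coe y]
      set qy := ∑ j, Complex.normSq (y j) with hqydef
      have hqy : 0 ≤ qy := sum_normSq_nonneg y
      have hcs : Complex.normSq (star u ⬝ᵥ y) ≤ qu * qy := by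
        have := dot_cs u y
        rwa [dot_self_coe u, dot_self_coe y, Complex.ofReal_re, Complex.ofReal_re] at this
      have key : ε * Complex.normSq (star u ⬝ᵥ y) ≤ qy := by
        calc ε * Complex.normSq (star u ⬝ᵥ y) ≤ ε * (qu * qy) := by
              exact mul_le_mul_of_nonneg_left hcs hε.le
          _ = (ε * qu) * qy := by ring
          _ ≤ 1 * qy := mul_le_mul_of_nonneg_right hεqu hqy
          _ = qy := one_mul qy
      have : (0:ℂ) ≤ ((qy - ε * Complex.normSq (star u ⬝ᵥ y) : ℝ) : ℂ) := by
        exact_mod_cast Complex.zero_le_real.mpr (by linarith)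
      calc (0:ℂ) ≤ ((qy - ε * Complex.normSq (star u ⬝ᵥ y) : ℝ) : ℂ) := this
        _ = (qy : ℂ) - (ε : ℂ) * (Complex.normSq (star u ⬝ᵥ y) : ℂ) := by push_cast; ring
  -- traces
  have htraceE0 : ∀ σ : Matrix (Fin n) (Fin n) ℂ, (E0 * σ).trace = (ε : ℂ) * (star u ⬝ᵥ (σ *ᵥ u)) := by
    intro σ
    rw [hE0def, Matrix.smul_mul, Matrix.trace_smul, hM0def, trace_vecMulVec_mul, smul_eq_mul]
  have hdot1 : star u ⬝ᵥ (σ1 *ᵥ u) = (q1 : ℂ) := by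
    rw [← h1.sqrt_mul_self, ← hAdef, mulVec_self_dot hAH, ← hw1def, dot_self_coe, ← hq1def]
  have hdot2 : star u ⬝ᵥ (σ2 *ᵥ u) = (q2 : ℂ) := by
    rw [← h2.sqrt_mul_self, ← hBdef, mulVec_self_dot hBH, ← hw2def, dot_self_coe, ← hq2def]
  have htr01 : (E0 * σ1).trace = ((ε * q1 : ℝ) : ℂ) := by
    rw [htraceE0 σ1, hdot1]; push_cast; ring
  have htr02 : (E0 * σ2).trace = ((ε * q2 : ℝ) : ℂ) := by
    rw [htraceE0 σ2, hdot2]; push_cast; ring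
  have htr11 : (E1 * σ1).trace = ((1 - ε * q1 : ℝ) : ℂ) := by
    rw [hE1def, Matrix.sub_mul, Matrix.trace_sub, Matrix.one_mul, htr1, htr01]; push_cast; ring
  have htr12 : (E1 * σ2).trace = ((1 - ε * q2 : ℝ) : ℂ) := by
    rw [hE1def, Matrix.sub_mul, Matrix.trace_sub, Matrix.one_mul, htr2, htr02]; push_cast; ring
  have hεq1 : ε * q1 < 1 := by
    have hlt : q1 < den := by rw [hdendef]; linarith
    calc ε * q1 = q1 / den := by rw [hεdef]; ring
      _ < 1 := (div_lt_one hden).mpr hlt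
  have hεq2 : ε * q2 < 1 := by
    have hlt : q2 < den := by rw [hdendef]; linarith
    calc ε * q2 = q2 / den := by rw [hεdef]; ring
      _ < 1 := (div_lt_one hden).mpr hlt
  -- assemble
  refine ⟨Fin 2, inferInstance, ⟨0⟩, ![E0, E1], ?_, ?_, ?_, 0, ?_⟩
  · intro x
    fin_cases x
    · simpa using hE0psd
    · simpa using hE1psd
  · rw [Fin.sum_univ_two]
    simp only [Matrix.cons_val_zero, Matrix.cons_val_one, Matrix.head_cons]
    rw [hE1def, add_sub_cancel]
  · intro x
    fin_cases x
    · show 0 < ((E0 * σ1).trace).re ∧ 0 < ((E0 * σ2).trace).re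
      rw [htr01, htr02]
      constructor
      · simpa using mul_pos hε hq1
      · simpa using mul_pos hε hq2
    · show 0 < ((E1 * σ1).trace).re ∧ 0 < ((E1 * σ2).trace).re
      rw [htr11, htr12]
      constructor
      · simpa using hεq1
      · simpa using hεq2
  · simp only [Matrix.cons_val_zero]
    rw [htr01, htr02]
    have hAMA : A * E0 * A = (ε : ℂ) • Matrix.vecMulVec w1 (star w1) := by
      rw [hE0def, Matrix.mul_smul, Matrix.smul_mul, hM0def, _root_.mul_vecMulVec, vecMulVec_mul,
        star_vecMul_herm hAH, ← hw1def]
    have hBMB : B * E0 * B = (ε : ℂ) • Matrix.vecMulVec w2 (star w2) := by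
      rw [hE0def, Matrix.mul_smul, Matrix.smul_mul, hM0def, _root_.mul_vecMulVec, vecMulVec_mul,
        star_vecMul_herm hBH, ← hw2def]
    have hvv2 : Matrix.vecMulVec w2 (star w2) =
        ((r : ℂ) * (r : ℂ)) • Matrix.vecMulVec w1 (star w1) := by
      rw [hw2, star_smul, RCLike.star_def, Complex.conj_ofReal]
      ext i j
      simp only [Matrix.vecMulVec_apply, Matrix.smul_apply, Pi.smul_apply, Pi.star_apply,
        smul_eq_mul]
      ring
    have hq2r : q2 = r ^ 2 * q1 := by
      have hc : ((q2 : ℝ) : ℂ) = ((r ^ 2 * q1 : ℝ) : ℂ) := by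
        conv_lhs => rw [hq2def]
        rw [← dot_self_coe w2, hw2, star_smul, smul_dotProduct,
          dotProduct_smul, dot_self_coe w1, ← hq1def]
        simp only [smul_eq_mul, RCLike.star_def, Complex.conj_ofReal]
        push_cast
        ring
      exact_mod_cast hc
    rw [hAMA, hBMB, hvv2, smul_smul, smul_smul, smul_smul]
    congr 1
    rw [hq2r]
    have hq10 : (q1 : ℂ) ≠ 0 := Complex.ofReal_ne_zero.mpr hq1.ne'
    have hε0 : (ε : ℂ) ≠ 0 := Complex.ofReal_ne_zero.mpr hε.ne'
    have hr0 : (r : ℂ) ≠ 0 := Complex.ofReal_ne_zero.mpr hr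
    push_cast
    field_simp

lemma forward_dir {σ1 σ2 : Matrix (Fin n) (Fin n) ℂ}
    (h1 : σ1.PosSemidef) (h2 : σ2.PosSemidef) (hc : QSubjCompatible h1 h2) :
    LinearMap.range (Matrix.toLin' σ1) ⊓ LinearMap.range (Matrix.toLin' σ2) ≠ ⊥ := by
  obtain ⟨X, _, ⟨x0⟩, E, hEpsd, hEsum, hpos, xt, heq⟩ := hc
  set A := h1.sqrt with hAdef
  set B := h2.sqrt with hBdef
  set c1 := (E xt * σ1).trace with hc1def
  set c2 := (E xt * σ2).trace with hc2def
  have hc10 : c1 ≠ 0 := fun h => by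
    have := (hpos xt).1; rw [← hc1def, h] at this; simp at this
  have hc20 : c2 ≠ 0 := fun h => by
    have := (hpos xt).2; rw [← hc2def, h] at this; simp at this
  set M := A * E xt * A with hMdef
  have htr : M.trace = c1 := by
    rw [hMdef, Matrix.trace_mul_comm (A * E xt) A, ← Matrix.mul_assoc,
      Matrix.trace_mul_comm (A * A) (E xt), hAdef, h1.sqrt_mul_self, hc1def]
  have hM0 : M ≠ 0 := fun h => hc10 (by rw [← htr, h, Matrix.trace_zero])
  have hw : ∃ w, M *ᵥ w ≠ 0 := by
    by_contra hw
    push_neg at hw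
    exact hM0 (matrix_eq_of_mulVec fun y => by rw [hw y, Matrix.zero_mulVec])
  obtain ⟨w, hw0⟩ := hw
  set v := M *ᵥ w with hvdef
  have hrange1 : LinearMap.range (Matrix.toLin' σ1) = LinearMap.range (Matrix.toLin' A) := by
    rw [← h1.sqrt_mul_self]
    exact range_toLin'_mul_self h1.posSemidef_sqrt.1
  have hrange2 : LinearMap.range (Matrix.toLin' σ2) = LinearMap.range (Matrix.toLin' B) := by
    rw [← h2.sqrt_mul_self]
    exact range_toLin'_mul_self h2.posSemidef_sqrt.1
  have hmem1 : v ∈ LinearMap.range (Matrix.toLin' σ1) := by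
    rw [hrange1]
    refine ⟨(E xt * A) *ᵥ w, ?_⟩
    rw [Matrix.toLin'_apply, Matrix.mulVec_mulVec, ← Matrix.mul_assoc]
  have hMN : M = (c1 * c2⁻¹) • (B * E xt * B) := by
    have h5 : c1 • (c1⁻¹ • M) = c1 • (c2⁻¹ • (B * E xt * B)) := by rw [heq]
    rwa [smul_smul, smul_smul, mul_inv_cancel₀ hc10, one_smul] at h5
  have hmem2 : v ∈ LinearMap.range (Matrix.toLin' σ2) := by
    rw [hrange2]
    refine ⟨(c1 * c2⁻¹) • ((E xt * B) *ᵥ w), ?_⟩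
    rw [Matrix.toLin'_apply, Matrix.mulVec_smul, Matrix.mulVec_mulVec, ← Matrix.mul_assoc,
      hvdef, hMN, Matrix.smul_mulVec]
  intro hbot
  rw [Submodule.eq_bot_iff] at hbot
  exact hw0 (hbot v ⟨hmem1, hmem2⟩)

end Auxiliary

open Matrix

/-- Two density matrices on `ℂ^n` (`n ≥ 1`) are subjectively compatible iff
their ranges (column spaces) have nontrivial intersection. -/
theorem qSubjCompatible_iff_ranges_intersect
    {n : ℕ} (hn : 1 ≤ n) (σ1 σ2 : Matrix (Fin n) (Fin n) ℂ)
    (h1 : IsDensityMatrix σ1) (h2 : IsDensityMatrix σ2) :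
    QSubjCompatible h1.1 h2.1 ↔
      LinearMap.range (Matrix.toLin' σ1) ⊓ LinearMap.range (Matrix.toLin' σ2) ≠ ⊥ := by
  constructor
  · exact forward_dir h1.1 h2.1
  · intro hne
    obtain ⟨v, hvmem, hv0⟩ := (Submodule.ne_bot_iff _).mp hne
    obtain ⟨hv1, hv2⟩ := hvmem
    obtain ⟨a0, ha0⟩ := hv1
    obtain ⟨b0, hb0⟩ := hv2
    have hA : (h1.1.sqrt).PosSemidef := h1.1.posSemidef_sqrt
    have hB : (h2.1.sqrt).PosSemidef := h2.1.posSemidef_sqrt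
    have hva : h1.1.sqrt *ᵥ (h1.1.sqrt *ᵥ a0) = v := by
      rw [Matrix.mulVec_mulVec, h1.1.sqrt_mul_self]
      rw [Matrix.toLin'_apply] at ha0
      exact ha0
    have hvb : h2.1.sqrt *ᵥ (h2.1.sqrt *ᵥ b0) = v := by
      rw [Matrix.mulVec_mulVec, h2.1.sqrt_mul_self]
      rw [Matrix.toLin'_apply] at hb0
      exact hb0
    have hCpsd : (h1.1.sqrt + h2.1.sqrt).PosSemidef := hA.add hB
    obtain ⟨u, r, hr, hAu0, hBu⟩ :=
      parallel_vec hA hB rfl hCpsd.1 (fun i => hCpsd.eigenvalues_nonneg i) hva hvb hv0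
    exact build_povm h1.1 h2.1 h1.2 h2.2 u r hr hAu0 hBu
end

section
/- Let n ≥ 1 and let X1, X2 be finite nonempty types. Let ρ : X1 → X2 → Matrix (Fin n) (Fin n) ℂ be a family with every ρ x1 x2 positive semidefinite and ∑ x1, ∑ x2, trace (ρ x1 x2) = 1; write ρ1 x1 = ∑ x2, ρ x1 x2, ρ2 x2 = ∑ x1, ρ x1 x2, and ρ_B = ∑ x1, ∑ x2, ρ x1 x2, and assume ρ_B is positive definite. Let ρ_B^{1/2} be the positive definite square root of ρ_B and R = (ρ_B^{1/2})⁻¹. Assume the conditional-independence condition: for all x1 : X1 and x2 : X2, R * (ρ x1 x2) * R = (R * (ρ1 x1) * R) * (R * (ρ2 x2) * R). Fix x1, x2 with the real part of trace (ρ x1 x2) strictly positive, and define the normalized states σ1 = (trace (ρ1 x1))⁻¹ • (ρ1 x1), σ2 = (trace (ρ2 x2))⁻¹ • (ρ2 x2), and σ_pooled = (trace (ρ x1 x2))⁻¹ • (ρ x1 x2). Then there exists a real constant c > 0 such that σ_pooled = c • (σ1 * ρ_B⁻¹ * σ2). -/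
open scoped ComplexOrder MatrixOrder

lemma psd_trace_nonneg {n : ℕ} {A : Matrix (Fin n) (Fin n) ℂ} (h : A.PosSemidef) :
    0 ≤ A.trace := by
  have hdiag : ∀ i, 0 ≤ A i i := by
    intro i
    exact h.diag_nonneg
  exact Finset.sum_nonneg fun i _ => hdiag i


/-- **Quantum state pooling.**
Let `ρ : X1 → X2 → Matrix (Fin n) (Fin n) ℂ` be a hybrid state over classical
variables `X1`, `X2` and a quantum region `B = ℂ^n` (each `ρ x1 x2` positive
semidefinite, total trace `1`), with reduced states `ρ1 x1 = ∑ x2, ρ x1 x2`,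
`ρ2 x2 = ∑ x1, ρ x1 x2` and positive definite prior `ρB = ∑ x1, ∑ x2, ρ x1 x2`.
Assume the conditional-independence condition
`R * ρ x1 x2 * R = (R * ρ1 x1 * R) * (R * ρ2 x2 * R)` for all `x1`, `x2`, where
`R = (ρB^{1/2})⁻¹` is the inverse of the positive (semi)definite square root of
`ρB`.  Then for any `x1`, `x2` with `Re (tr (ρ x1 x2)) > 0`, the pooled state
`σpooled = (tr (ρ x1 x2))⁻¹ • ρ x1 x2` satisfies
`σpooled = c • (σ1 * ρB⁻¹ * σ2)` for some real constant `c > 0`, where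
`σ1 = (tr (ρ1 x1))⁻¹ • ρ1 x1` and `σ2 = (tr (ρ2 x2))⁻¹ • ρ2 x2`. -/
theorem quantum_pooling
    {n : ℕ} (hn : 1 ≤ n)
    {X1 X2 : Type} [Fintype X1] [Fintype X2] [Nonempty X1] [Nonempty X2]
    (ρ : X1 → X2 → Matrix (Fin n) (Fin n) ℂ)
    (hpsd : ∀ (a : X1) (b : X2), (ρ a b).PosSemidef)
    (htr : ∑ a, ∑ b, (ρ a b).trace = 1)
    (hB : (∑ a, ∑ b, ρ a b).PosDef)
    (hCI : ∀ (a : X1) (b : X2),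
      (CFC.sqrt (∑ a, ∑ b, ρ a b))⁻¹ * ρ a b * (CFC.sqrt (∑ a, ∑ b, ρ a b))⁻¹ =
        ((CFC.sqrt (∑ a, ∑ b, ρ a b))⁻¹ * (∑ b', ρ a b') * (CFC.sqrt (∑ a, ∑ b, ρ a b))⁻¹) *
          ((CFC.sqrt (∑ a, ∑ b, ρ a b))⁻¹ * (∑ a', ρ a' b) * (CFC.sqrt (∑ a, ∑ b, ρ a b))⁻¹))
    (x1 : X1) (x2 : X2) (hpos : 0 < ((ρ x1 x2).trace).re) :
    ∃ c : ℝ, 0 < c ∧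
      ((ρ x1 x2).trace)⁻¹ • ρ x1 x2 =
        (c : ℂ) • ((((∑ b, ρ x1 b).trace)⁻¹ • (∑ b, ρ x1 b)) *
            (∑ a, ∑ b, ρ a b)⁻¹ *
          (((∑ a, ρ a x2).trace)⁻¹ • (∑ a, ρ a x2))) := by
  classical
  set S := CFC.sqrt (∑ a, ∑ b, ρ a b) with hSdef
  set ρB := ∑ a, ∑ b, ρ a b with hρBdef
  -- invertibility of S
  have hSS : S * S = ρB := CFC.sqrt_mul_sqrt_self _ hB.posSemidef.nonneg
  have hdetB : ρB.det ≠ 0 := hB.det_pos.ne'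
  have hdetS : IsUnit S.det := by
    have : S.det * S.det = ρB.det := by rw [← Matrix.det_mul, hSS]
    exact isUnit_iff_ne_zero.2 fun h => hdetB (by rw [← this, h, mul_zero])
  have hS1 : S * S⁻¹ = 1 := Matrix.mul_nonsing_inv S hdetS
  have hS2 : S⁻¹ * S = 1 := Matrix.nonsing_inv_mul S hdetS
  have hinvB : ρB⁻¹ = S⁻¹ * S⁻¹ := by rw [← hSS, Matrix.mul_inv_rev]
  -- key factorization
  have key : ρ x1 x2 = (∑ b, ρ x1 b) * ρB⁻¹ * (∑ a, ρ a x2) := by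
    have h := hCI x1 x2
    have := congrArg (fun M => S * M * S) h
    simp only [Matrix.mul_assoc] at this
    calc ρ x1 x2 = S * S⁻¹ * (ρ x1 x2 * (S⁻¹ * S)) := by
          rw [hS1, hS2, Matrix.one_mul, Matrix.mul_one]
      _ = S * (S⁻¹ * (ρ x1 x2 * (S⁻¹ * S))) := by simp only [Matrix.mul_assoc]
      _ = S * (S⁻¹ * ((∑ b, ρ x1 b) * (S⁻¹ * (S⁻¹ * ((∑ a, ρ a x2) * (S⁻¹ * S)))))) := this
      _ = S * S⁻¹ * (∑ b, ρ x1 b) * (S⁻¹ * S⁻¹) * ((∑ a, ρ a x2) * (S⁻¹ * S)) := by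
          simp only [Matrix.mul_assoc]
      _ = (∑ b, ρ x1 b) * ρB⁻¹ * (∑ a, ρ a x2) := by
          rw [hS1, hS2, hinvB, Matrix.one_mul, Matrix.mul_one]
  -- traces
  set t := (ρ x1 x2).trace with htdef
  set t1 := (∑ b, ρ x1 b).trace with ht1def
  set t2 := (∑ a, ρ a x2).trace with ht2def
  have htnn : ∀ a b, 0 ≤ ((ρ a b).trace) := fun a b => psd_trace_nonneg (hpsd a b)
  have htre : ∀ a b, ((ρ a b).trace).im = 0 ∧ 0 ≤ ((ρ a b).trace).re := by
    intro a b
    have := htnn a b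
    rw [Complex.le_def] at this
    exact ⟨this.2.symm, this.1⟩
  have ht1re : t1.re = ∑ b, ((ρ x1 b).trace).re := by
    rw [ht1def, Matrix.trace_sum, Complex.re_sum]
  have ht1im : t1.im = 0 := by
    rw [ht1def, Matrix.trace_sum, Complex.im_sum]
    exact Finset.sum_eq_zero fun b _ => (htre x1 b).1
  have ht2re : t2.re = ∑ a, ((ρ a x2).trace).re := by
    rw [ht2def, Matrix.trace_sum, Complex.re_sum]
  have ht2im : t2.im = 0 := by
    rw [ht2def, Matrix.trace_sum, Complex.im_sum]
    exact Finset.sum_eq_zero fun a _ => (htre a x2).1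
  have htim : t.im = 0 := (htre x1 x2).1
  have ht1pos : 0 < t1.re := by
    rw [ht1re]
    exact lt_of_lt_of_le hpos (Finset.single_le_sum (fun b _ => (htre x1 b).2) (Finset.mem_univ x2))
  have ht2pos : 0 < t2.re := by
    rw [ht2re]
    exact lt_of_lt_of_le hpos (Finset.single_le_sum (fun a _ => (htre a x2).2) (Finset.mem_univ x1))
  have ht : t = (t.re : ℂ) := Complex.ext rfl (by simp [htim])
  have ht1 : t1 = (t1.re : ℂ) := Complex.ext rfl (by simp [ht1im])
  have ht2 : t2 = (t2.re : ℂ) := Complex.ext rfl (by simp [ht2im])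
  refine ⟨t1.re * t2.re / t.re, by positivity, ?_⟩
  rw [Matrix.mul_smul, Matrix.smul_mul, Matrix.smul_mul, smul_smul, smul_smul, ← key]
  congr 1
  have h0 : (t.re : ℂ) ≠ 0 := Complex.ofReal_ne_zero.2 (ne_of_gt hpos)
  have h1 : (t1.re : ℂ) ≠ 0 := Complex.ofReal_ne_zero.2 (ne_of_gt ht1pos)
  have h2 : (t2.re : ℂ) ≠ 0 := Complex.ofReal_ne_zero.2 (ne_of_gt ht2pos)
  rw [ht, ht1, ht2]
  push_cast
  simp only [Complex.ofReal_re]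
  field_simp
end
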